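/- For α ∈ (0,1) one has θ_2 ≠ 0 and θ_3/θ_2 − δ_3 = (1/(3(1+α)))·(4α⁴ − 4α³ + 17α² + 7)/(2α² − α + 5) > 0; in particular θ_3/θ_2 ≥ δ_3. -/

import Mathlib

/-- The sequence `θ_m`. -/
noncomputable def seqTheta (α : ℝ) : ℕ → ℝ
  | 0 => ((α + 1) / (2 * α)) ^ α
  | 1 => (α - 1) * (2 * α + 1) / (α + 1) * seqTheta α 0
  | (m + 2) =>
      2 * α / (((m : ℝ) + 2) * (1 + α)) *
        (((((m : ℝ) + 2) - 1) / α - (1 - α) / (2 * α) * (2 * α + 1)) * seqTheta α (m + 1) +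
          (1 - α) / (2 * α) * (3 - ((m : ℝ) + 2)) * seqTheta α m)

/-- `δ_m` from the paper. -/
noncomputable def deltaT (α : ℝ) (m : ℕ) : ℝ :=
  (1 - α) / (2 * α) * ((m : ℝ) - 2) /
      ((m : ℝ) / α - (1 - α) / (2 * α) * (2 * α + 1)) * (2 / (1 + α)) * (1 + 1 / (m : ℝ))

theorem seqTheta_three_two (α : ℝ) (hα : α ∈ Set.Ioo (0 : ℝ) 1) :
    seqTheta α 2 ≠ 0 ∧
    seqTheta α 3 / seqTheta α 2 - deltaT α 3 =
      1 / (3 * (1 + α)) * (4 * α ^ 4 - 4 * α ^ 3 + 17 * α ^ 2 + 7) / (2 * α ^ 2 - α + 5) ∧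
    0 < 1 / (3 * (1 + α)) * (4 * α ^ 4 - 4 * α ^ 3 + 17 * α ^ 2 + 7) / (2 * α ^ 2 - α + 5) ∧
    deltaT α 3 ≤ seqTheta α 3 / seqTheta α 2 := by
  obtain ⟨ha0, ha1⟩ := hα
  have hane : α ≠ 0 := ne_of_gt ha0
  have h1a : (0:ℝ) < 1 + α := by linarith
  have h1ane : (1:ℝ) + α ≠ 0 := ne_of_gt h1a
  have ha1ne : α + 1 ≠ 0 := by linarith
  have hθ0 : (0:ℝ) < seqTheta α 0 := by
    show (0:ℝ) < ((α + 1) / (2 * α)) ^ α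
    exact Real.rpow_pos_of_pos (by positivity) α
  have e1 : seqTheta α 1 = (α - 1) * (2 * α + 1) / (α + 1) * seqTheta α 0 := rfl
  have e2 : seqTheta α 2 = 2 * α ^ 3 * (α - 1) / (1 + α) ^ 2 * seqTheta α 0 := by
    have u2 : seqTheta α 2 =
        2 * α / ((((0:ℕ) : ℝ) + 2) * (1 + α)) *
          ((((((0:ℕ) : ℝ) + 2) - 1) / α - (1 - α) / (2 * α) * (2 * α + 1)) * seqTheta α 1 +
            (1 - α) / (2 * α) * (3 - (((0:ℕ) : ℝ) + 2)) * seqTheta α 0) := rfl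
    rw [u2, e1]
    push_cast
    field_simp
    ring
  have e3 : seqTheta α 3 =
      2 * α ^ 3 * (α - 1) * (2 * α ^ 3 + α ^ 2 + 2 * α + 3) / (3 * (1 + α) ^ 4) *
        seqTheta α 0 := by
    have u3 : seqTheta α 3 =
        2 * α / ((((1:ℕ) : ℝ) + 2) * (1 + α)) *
          ((((((1:ℕ) : ℝ) + 2) - 1) / α - (1 - α) / (2 * α) * (2 * α + 1)) * seqTheta α 2 +
            (1 - α) / (2 * α) * (3 - (((1:ℕ) : ℝ) + 2)) * seqTheta α 1) := rfl
    rw [u3, e2, e1]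
    push_cast
    field_simp
    ring
  have hC2 : 2 * α ^ 3 * (α - 1) / (1 + α) ^ 2 ≠ 0 := by
    apply div_ne_zero _ (by positivity)
    have : α - 1 < 0 := by linarith
    intro h
    nlinarith [pow_pos ha0 3]
  have h2ne : seqTheta α 2 ≠ 0 := by
    rw [e2]; exact mul_ne_zero hC2 (ne_of_gt hθ0)
  have hratio : seqTheta α 3 / seqTheta α 2 =
      (2 * α ^ 3 + α ^ 2 + 2 * α + 3) / (3 * (1 + α) ^ 2) := by
    rw [e2, e3, mul_div_mul_right _ _ (ne_of_gt hθ0)]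
    have ha1' : α - 1 ≠ 0 := by intro h; linarith
    field_simp
  have hden : (2:ℝ) * α ^ 2 - α + 5 > 0 := by nlinarith
  have hd3 : deltaT α 3 = (1 - α) / (2 * α) / (3 / α - (1 - α) / (2 * α) * (2 * α + 1)) *
      (2 / (1 + α)) * (4 / 3) := by
    unfold deltaT
    norm_num
  have hc : 3 / α - (1 - α) / (2 * α) * (2 * α + 1) = (2 * α ^ 2 - α + 5) / (2 * α) := by
    field_simp; ring
  have key : seqTheta α 3 / seqTheta α 2 - deltaT α 3 =
      1 / (3 * (1 + α)) * (4 * α ^ 4 - 4 * α ^ 3 + 17 * α ^ 2 + 7) / (2 * α ^ 2 - α + 5) := by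
    rw [hratio, hd3, hc]
    field_simp
    have h5 : α * (2 * α - 1) + 5 ≠ 0 := by nlinarith
    rw [eq_div_iff h5, sub_mul, div_mul_cancel₀ _ h5]
    ring
  have hpos : 0 < 1 / (3 * (1 + α)) * (4 * α ^ 4 - 4 * α ^ 3 + 17 * α ^ 2 + 7) /
      (2 * α ^ 2 - α + 5) := by
    apply div_pos _ hden
    apply mul_pos (by positivity)
    nlinarith [sq_nonneg (2 * α ^ 2 - α), sq_nonneg α]
  exact ⟨h2ne, key, hpos, by linarith [key, hpos]⟩
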